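/- Let F : [0,∞) → ℝ be a cumulative distribution function of a nonnegative random variable (F nondecreasing, F(0) = 0, F(t) → 1 as t → ∞), continuously differentiable on [0,∞), satisfying the renewal equation F(t) = 2t/(1+t)³ + ∫₀ᵗ 2/(1+(t−y))³ · F(y) dy for all t ≥ 0. For n ≥ 2 set ρₙ = n√(log n), mₙ = ∫₀^{ρₙ} t F′(t) dt and sₙ = ∫₀^{ρₙ} t² F′(t) dt. Then mₙ / log(n) → 1 and sₙ / (n√(log n)) → 1 as n → ∞. -/

import Mathlib

open MeasureTheory Filter Set

set_option linter.unusedSectionVars false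


theorem triangle_swap (f : ℝ → ℝ → ℝ) (hf : Continuous fun p : ℝ × ℝ => f p.1 p.2)
    {t : ℝ} (ht : 0 ≤ t) :
    (∫ s in (0:ℝ)..t, ∫ y in (0:ℝ)..s, f s y) = ∫ y in (0:ℝ)..t, ∫ s in y..t, f s y := by
  set T : Set (ℝ × ℝ) := {p : ℝ × ℝ | p.2 ≤ p.1} with hT
  have hTmeas : MeasurableSet T := (isClosed_le continuous_snd continuous_fst).measurableSet
  set g : ℝ × ℝ → ℝ := T.indicator (fun p : ℝ × ℝ => f p.1 p.2) with hg
  have hmeas : Measurable g := hf.measurable.indicator hTmeas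
  obtain ⟨C, hC⟩ := (isCompact_Icc.prod isCompact_Icc).exists_bound_of_continuousOn
      (s := Icc (0:ℝ) t ×ˢ Icc (0:ℝ) t) hf.continuousOn
  have hint : Integrable (fun p : ℝ × ℝ => g p)
      ((volume.restrict (Ioc (0:ℝ) t)).prod (volume.restrict (Ioc (0:ℝ) t))) := by
    rw [Measure.prod_restrict]
    apply Measure.integrableOn_of_bounded (M := max C 0)
    · rw [Measure.prod_prod]; simp [Real.volume_Ioc]; exact ENNReal.mul_ne_top (by simp) (by simp)
    · exact (hmeas.aestronglyMeasurable)
    · filter_upwards [ae_restrict_mem ((measurableSet_Ioc).prod measurableSet_Ioc)] with p hp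
      rcases hp with ⟨hp1, hp2⟩
      by_cases hpT : p ∈ T
      · rw [hg, indicator_of_mem hpT]
        exact le_max_of_le_left (by
          simpa [Real.norm_eq_abs] using hC p ⟨⟨hp1.1.le, hp1.2⟩, ⟨hp2.1.le, hp2.2⟩⟩)
      · rw [hg, indicator_of_notMem hpT]; simp
  have swap := integral_integral_swap (f := fun s y => g (s, y)) hint
  -- identify LHS
  have hL : (∫ s in Ioc (0:ℝ) t, ∫ y in Ioc (0:ℝ) t, g (s, y)) 
      = ∫ s in (0:ℝ)..t, ∫ y in (0:ℝ)..s, f s y := by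
    rw [intervalIntegral.integral_of_le ht]
    apply setIntegral_congr_fun measurableSet_Ioc
    intro s hs
    have : (fun y => g (s, y)) = (Iic s).indicator (fun y => f s y) := by
      funext y
      by_cases hy : y ≤ s
      · rw [hg, indicator_of_mem (by exact hy : (s,y) ∈ T), indicator_of_mem (by exact hy)]
      · rw [hg, indicator_of_notMem (by exact hy : (s,y) ∉ T), indicator_of_notMem (by exact hy)]
    show (∫ y in Ioc (0:ℝ) t, g (s, y)) = ∫ y in (0:ℝ)..s, f s y
    rw [this, integral_indicator measurableSet_Iic, Measure.restrict_restrict measurableSet_Iic,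
      intervalIntegral.integral_of_le hs.1.le]
    congr 1
    rw [Set.inter_comm, Set.Ioc_inter_Iic, min_eq_right hs.2]
  have hR : (∫ y in Ioc (0:ℝ) t, ∫ s in Ioc (0:ℝ) t, g (s, y))
      = ∫ y in (0:ℝ)..t, ∫ s in y..t, f s y := by
    rw [intervalIntegral.integral_of_le ht]
    apply setIntegral_congr_fun measurableSet_Ioc
    intro y hy
    have : (fun s => g (s, y)) = (Ici y).indicator (fun s => f s y) := by
      funext s
      by_cases hsy : y ≤ s
      · rw [hg, indicator_of_mem (by exact hsy : (s,y) ∈ T), indicator_of_mem (by exact hsy)]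
      · rw [hg, indicator_of_notMem (by exact hsy : (s,y) ∉ T),
          indicator_of_notMem (by exact hsy)]
    show (∫ s in Ioc (0:ℝ) t, g (s, y)) = ∫ s in y..t, f s y
    rw [this, integral_indicator measurableSet_Ici, Measure.restrict_restrict measurableSet_Ici,
      intervalIntegral.integral_of_le hy.2]
    have hset : Ici y ∩ Ioc (0:ℝ) t = Icc y t := by
      ext s
      simp only [mem_inter_iff, mem_Ici, mem_Ioc, mem_Icc]
      constructor
      · rintro ⟨h1, _, h3⟩; exact ⟨h1, h3⟩
      · rintro ⟨h1, h2⟩; exact ⟨h1, lt_of_lt_of_le hy.1 h1, h2⟩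
    rw [hset, integral_Icc_eq_integral_Ioc]
  rw [← hL, ← hR]; exact swap


-- FTC helper: ∫ s in a..b, 2/(1+(s-c))^3 when 0 < 1+(s-c) on [a,b]
theorem helperA {c a b : ℝ} (hca : c ≤ a) (hab : a ≤ b) :
    (∫ s in a..b, 2 / (1 + (s - c)) ^ 3) =
      1 / (1 + (a - c)) ^ 2 - 1 / (1 + (b - c)) ^ 2 := by
  have key : ∀ s ∈ Set.uIcc a b, HasDerivAt (fun s => -(1 + (s - c))⁻¹ ^ 2)
      (2 / (1 + (s - c)) ^ 3) s := by
    intro s hs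
    rw [Set.uIcc_of_le hab] at hs
    have hpos : (0:ℝ) < 1 + (s - c) := by linarith [hs.1]
    have h1 : HasDerivAt (fun s : ℝ => 1 + (s - c)) 1 s := by
      simpa using ((hasDerivAt_id s).sub_const c).const_add 1
    have h2 : HasDerivAt (fun s : ℝ => (1 + (s - c))⁻¹)
        (-1 / (1 + (s - c)) ^ 2) s := by
      exact h1.inv (ne_of_gt hpos)
    have h3 := (h2.pow 2).neg
    refine h3.congr_deriv ?_
    rw [show (2:ℕ) - 1 = 1 from rfl]
    field_simp
    ring
  rw [intervalIntegral.integral_eq_sub_of_hasDerivAt key]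
  · have h1 : (0:ℝ) < 1 + (a - c) := by linarith
    have h2 : (0:ℝ) < 1 + (b - c) := by linarith
    field_simp
    ring
  · apply ContinuousOn.intervalIntegrable
    apply continuousOn_const.div
    · exact (ContinuousOn.pow (by fun_prop) 3)
    · intro s hs
      rw [Set.uIcc_of_le hab] at hs
      exact pow_ne_zero _ (by nlinarith [hs.1] : (1:ℝ) + (s - c) ≠ 0)

-- ∫ y in a..b, 1/(1+(t-y))^2 = 1/(1+(t-b)) - 1/(1+(t-a)), for a ≤ b ≤ t
theorem helperK {t a b : ℝ} (hab : a ≤ b) (hbt : b ≤ t) :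
    (∫ y in a..b, 1 / (1 + (t - y)) ^ 2) = 1 / (1 + (t - b)) - 1 / (1 + (t - a)) := by
  have key : ∀ y ∈ Set.uIcc a b, HasDerivAt (fun y => (1 + (t - y))⁻¹)
      (1 / (1 + (t - y)) ^ 2) y := by
    intro y hy
    rw [Set.uIcc_of_le hab] at hy
    have hpos : (0:ℝ) < 1 + (t - y) := by linarith [hy.2]
    have h1 : HasDerivAt (fun y : ℝ => 1 + (t - y)) (-1) y := by
      simpa using ((hasDerivAt_id y).const_sub t).const_add 1
    have h2 := h1.inv (ne_of_gt hpos)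
    refine h2.congr_deriv ?_
    ring
  rw [intervalIntegral.integral_eq_sub_of_hasDerivAt key]
  · have h1 : (0:ℝ) < 1 + (t - a) := by linarith
    have h2 : (0:ℝ) < 1 + (t - b) := by linarith
    field_simp
  · apply ContinuousOn.intervalIntegrable
    apply continuousOn_const.div
    · exact (ContinuousOn.pow (by fun_prop) 2)
    · intro y hy
      rw [Set.uIcc_of_le hab] at hy
      exact pow_ne_zero _ (by nlinarith [hy.2] : (1:ℝ) + (t - y) ≠ 0)

-- ∫ s in 0..t, 2*s/(1+s)^3 = t^2/(1+t)^2, for 0 ≤ t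
theorem helperZ {t : ℝ} (ht : 0 ≤ t) :
    (∫ s in (0:ℝ)..t, 2 * s / (1 + s) ^ 3) = t ^ 2 / (1 + t) ^ 2 := by
  have key : ∀ s ∈ Set.uIcc (0:ℝ) t, HasDerivAt (fun s => s ^ 2 / (1 + s) ^ 2)
      (2 * s / (1 + s) ^ 3) s := by
    intro s hs
    rw [Set.uIcc_of_le ht] at hs
    have hpos : (0:ℝ) < 1 + s := by linarith [hs.1]
    have h1 : HasDerivAt (fun s : ℝ => s ^ 2) (2 * s) s := by
      simpa using hasDerivAt_pow 2 s
    have h2 : HasDerivAt (fun s : ℝ => (1 + s) ^ 2) (2 * (1 + s)) s := by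
      have := ((hasDerivAt_id s).const_add 1).pow 2
      refine this.congr_deriv ?_
      norm_num
    have h3 := h1.div h2 (pow_ne_zero _ (ne_of_gt hpos))
    refine h3.congr_deriv ?_
    field_simp
    ring
  rw [intervalIntegral.integral_eq_sub_of_hasDerivAt key]
  · norm_num
  · apply ContinuousOn.intervalIntegrable
    apply ContinuousOn.div (by fun_prop) (ContinuousOn.pow (by fun_prop) 3)
    intro s hs
    rw [Set.uIcc_of_le ht] at hs
    exact pow_ne_zero _ (by nlinarith [hs.1] : (1:ℝ) + s ≠ 0)

-- ∫ y in a..b, 1/(1+y) = log(1+b) - log(1+a), for -1 < a ≤ b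
theorem helperLog {a b : ℝ} (ha : -1 < a) (hab : a ≤ b) :
    (∫ y in a..b, 1 / (1 + y)) = Real.log (1 + b) - Real.log (1 + a) := by
  have key : ∀ y ∈ Set.uIcc a b, HasDerivAt (fun y => Real.log (1 + y))
      (1 / (1 + y)) y := by
    intro y hy
    rw [Set.uIcc_of_le hab] at hy
    have hpos : (0:ℝ) < 1 + y := by linarith [hy.1]
    have h1 : HasDerivAt (fun y : ℝ => 1 + y) 1 y := by
      simpa using (hasDerivAt_id y).const_add 1
    simpa using h1.log (ne_of_gt hpos)
  rw [intervalIntegral.integral_eq_sub_of_hasDerivAt key]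
  · apply ContinuousOn.intervalIntegrable
    apply continuousOn_const.div (by fun_prop)
    intro y hy
    rw [Set.uIcc_of_le hab] at hy
    exact (by nlinarith [hy.1] : (1:ℝ) + y ≠ 0)

theorem key_identity (F : ℝ → ℝ) (hFc : ContinuousOn F (Ici 0))
    (hrenewal : ∀ t, 0 ≤ t →
      F t = 2 * t / (1 + t) ^ 3 + ∫ y in (0:ℝ)..t, 2 / (1 + (t - y)) ^ 3 * F y)
    {t : ℝ} (ht : 0 ≤ t) :
    (∫ y in (0:ℝ)..t, F y / (1 + (t - y)) ^ 2) = t ^ 2 / (1 + t) ^ 2 := by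
  have hmaxpos : ∀ u : ℝ, (0:ℝ) < 1 + max u 0 := fun u => by
    have := le_max_right u 0; linarith
  set G : ℝ → ℝ := fun y => F (max y 0) with hG
  have hGc : Continuous G :=
    hFc.comp_continuous (continuous_id.max continuous_const) fun x => le_max_right x 0
  have hGF : ∀ y : ℝ, 0 ≤ y → G y = F y := fun y hy => by simp [hG, max_eq_left hy]
  set f : ℝ → ℝ → ℝ := fun s y => 2 / (1 + max (s - y) 0) ^ 3 * G y with hf
  have hfc : Continuous fun p : ℝ × ℝ => f p.1 p.2 := by
    apply Continuous.mul
    · apply continuous_const.div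
      · exact ((continuous_const.add (((continuous_fst.sub continuous_snd)).max
          continuous_const)).pow 3)
      · intro p; exact pow_ne_zero _ (ne_of_gt (hmaxpos _))
    · exact hGc.comp continuous_snd
  have swap := triangle_swap f hfc ht
  have hFInt : ∀ {a b : ℝ}, 0 ≤ a → a ≤ b → IntervalIntegrable F volume a b := by
    intro a b ha hab
    apply ContinuousOn.intervalIntegrable
    rw [Set.uIcc_of_le hab]
    exact hFc.mono (fun x hx => le_trans ha hx.1)
  -- LHS computation
  have hLinner : ∀ s ∈ Set.uIcc (0:ℝ) t, (∫ y in (0:ℝ)..s, f s y)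
      = F s - 2 * s / (1 + s) ^ 3 := by
    intro s hs
    rw [Set.uIcc_of_le ht] at hs
    have h1 : (∫ y in (0:ℝ)..s, f s y) = ∫ y in (0:ℝ)..s, 2 / (1 + (s - y)) ^ 3 * F y := by
      apply intervalIntegral.integral_congr
      intro y hy
      rw [Set.uIcc_of_le hs.1] at hy
      rw [hf]
      simp only
      rw [max_eq_left (by linarith [hy.2] : (0:ℝ) ≤ s - y), hGF y hy.1]
    have := hrenewal s hs.1
    rw [h1]
    linarith
  have hL : (∫ s in (0:ℝ)..t, ∫ y in (0:ℝ)..s, f s y)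
      = (∫ s in (0:ℝ)..t, F s) - t ^ 2 / (1 + t) ^ 2 := by
    rw [intervalIntegral.integral_congr hLinner]
    rw [intervalIntegral.integral_sub (hFInt le_rfl ht)]
    · rw [helperZ ht]
    · apply ContinuousOn.intervalIntegrable
      apply ContinuousOn.div (by fun_prop) (ContinuousOn.pow (by fun_prop) 3)
      intro s hs
      rw [Set.uIcc_of_le ht] at hs
      exact pow_ne_zero _ (by nlinarith [hs.1] : (1:ℝ) + s ≠ 0)
  -- RHS computation
  have hRinner : ∀ y ∈ Set.uIcc (0:ℝ) t, (∫ s in y..t, f s y)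
      = F y - F y / (1 + (t - y)) ^ 2 := by
    intro y hy
    rw [Set.uIcc_of_le ht] at hy
    have h1 : (∫ s in y..t, f s y) = ∫ s in y..t, 2 / (1 + (s - y)) ^ 3 * G y := by
      apply intervalIntegral.integral_congr
      intro s hsy
      rw [Set.uIcc_of_le hy.2] at hsy
      rw [hf]
      simp only
      rw [max_eq_left (by linarith [hsy.1] : (0:ℝ) ≤ s - y)]
    rw [h1, intervalIntegral.integral_mul_const, helperA le_rfl hy.2, hGF y hy.1]
    field_simp
    ring
  have hR : (∫ y in (0:ℝ)..t, ∫ s in y..t, f s y)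
      = (∫ y in (0:ℝ)..t, F y) - ∫ y in (0:ℝ)..t, F y / (1 + (t - y)) ^ 2 := by
    rw [intervalIntegral.integral_congr hRinner]
    rw [intervalIntegral.integral_sub (hFInt le_rfl ht)]
    apply ContinuousOn.intervalIntegrable
    rw [Set.uIcc_of_le ht]
    apply ContinuousOn.div (hFc.mono (fun x hx => hx.1)) (ContinuousOn.pow (by fun_prop) 2)
    intro y hy
    exact pow_ne_zero _ (by nlinarith [hy.2] : (1:ℝ) + (t - y) ≠ 0)
  rw [hL, hR] at swap
  linarith

section Tail

variable (F : ℝ → ℝ) (hFc : ContinuousOn F (Ici 0))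
  (hmono : ∀ a b : ℝ, 0 ≤ a → a ≤ b → F a ≤ F b)
  (hzero : F 0 = 0) (hlim : Filter.Tendsto F atTop (nhds 1))
  (hrenewal : ∀ t, 0 ≤ t →
      F t = 2 * t / (1 + t) ^ 3 + ∫ y in (0:ℝ)..t, 2 / (1 + (t - y)) ^ 3 * F y)

include hmono hlim in
theorem F_le_one : ∀ t : ℝ, 0 ≤ t → F t ≤ 1 := by
  intro t ht
  apply ge_of_tendsto hlim
  filter_upwards [eventually_ge_atTop t] with s hs
  exact hmono t s ht hs

include hmono hzero in
theorem F_nonneg : ∀ t : ℝ, 0 ≤ t → 0 ≤ F t := fun t ht => hzero ▸ hmono 0 t le_rfl ht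

-- integrability of (1-F y)/(1+(t-y))^2 on [a,b] ⊆ [0,t]
include hFc in
theorem intH {t a b : ℝ} (ha : 0 ≤ a) (hab : a ≤ b) (hbt : b ≤ t) :
    IntervalIntegrable (fun y => (1 - F y) / (1 + (t - y)) ^ 2) volume a b := by
  apply ContinuousOn.intervalIntegrable
  rw [Set.uIcc_of_le hab]
  apply ContinuousOn.div
  · exact continuousOn_const.sub (hFc.mono (fun x hx => le_trans ha hx.1))
  · fun_prop
  · intro y hy
    exact pow_ne_zero _ (by nlinarith [hy.2] : (1:ℝ) + (t - y) ≠ 0)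

include hFc hmono hlim hrenewal in
theorem h_identity : ∀ t : ℝ, 0 ≤ t →
    (∫ y in (0:ℝ)..t, (1 - F y) / (1 + (t - y)) ^ 2) = t / (1 + t) ^ 2 := by
  intro t ht
  have h1 : (∫ y in (0:ℝ)..t, (1 - F y) / (1 + (t - y)) ^ 2)
      = (∫ y in (0:ℝ)..t, 1 / (1 + (t - y)) ^ 2)
        - ∫ y in (0:ℝ)..t, F y / (1 + (t - y)) ^ 2 := by
    rw [← intervalIntegral.integral_sub]
    · apply intervalIntegral.integral_congr
      intro y hy
      rw [Set.uIcc_of_le ht] at hy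
      have : (1:ℝ) + (t - y) ≠ 0 := by nlinarith [hy.2]
      field_simp
    · apply ContinuousOn.intervalIntegrable
      rw [Set.uIcc_of_le ht]
      apply continuousOn_const.div (by fun_prop)
      intro y hy
      exact pow_ne_zero _ (by nlinarith [hy.2] : (1:ℝ) + (t - y) ≠ 0)
    · apply ContinuousOn.intervalIntegrable
      rw [Set.uIcc_of_le ht]
      apply ContinuousOn.div (hFc.mono (fun x hx => hx.1)) (by fun_prop)
      intro y hy
      exact pow_ne_zero _ (by nlinarith [hy.2] : (1:ℝ) + (t - y) ≠ 0)
  rw [h1, key_identity F hFc hrenewal ht, helperK ht le_rfl]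
  have hpos : (0:ℝ) < 1 + t := by linarith
  simp only [sub_self, add_zero, sub_zero]
  field_simp
  ring

include hFc hmono hzero hlim hrenewal in
theorem h_upper : ∀ t : ℝ, 0 ≤ t → 1 - F t ≤ 1 / (1 + t) := by
  intro t ht
  rcases eq_or_lt_of_le ht with h0 | htpos
  · rw [← h0, hzero]; norm_num
  have hkey := h_identity F hFc hmono hlim hrenewal t ht
  have hmonot : (∫ y in (0:ℝ)..t, (1 - F t) / (1 + (t - y)) ^ 2)
      ≤ ∫ y in (0:ℝ)..t, (1 - F y) / (1 + (t - y)) ^ 2 := by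
    apply intervalIntegral.integral_mono_on ht
    · -- integrability of constant version
      apply ContinuousOn.intervalIntegrable
      rw [Set.uIcc_of_le ht]
      apply continuousOn_const.div (by fun_prop)
      intro y hy
      exact pow_ne_zero _ (by nlinarith [hy.2] : (1:ℝ) + (t - y) ≠ 0)
    · exact intH F hFc le_rfl ht le_rfl
    · intro y hy
      have hker : (0:ℝ) < (1 + (t - y)) ^ 2 := by nlinarith [hy.2]
      exact (div_le_div_iff_of_pos_right hker).mpr (by linarith [hmono y t hy.1 hy.2])
  have hc : (∫ y in (0:ℝ)..t, (1 - F t) / (1 + (t - y)) ^ 2)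
      = (1 - F t) * (1 - 1 / (1 + t)) := by
    have e : ∀ y : ℝ, (1 - F t) / (1 + (t - y)) ^ 2
        = (1 - F t) * (1 / (1 + (t - y)) ^ 2) := fun y => div_eq_mul_one_div _ _
    simp_rw [e]
    rw [intervalIntegral.integral_const_mul, helperK ht le_rfl]
    norm_num
  have hpos : (0:ℝ) < 1 + t := by linarith
  have h2 : (1 - F t) * (1 - 1 / (1 + t)) ≤ t / (1 + t) ^ 2 := by
    rw [← hc, ← hkey]; exact hmonot
  rw [le_div_iff₀ hpos]
  have e2 : (1:ℝ) - 1 / (1 + t) = t / (1 + t) := by field_simp; ring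
  rw [e2] at h2
  have h3 : (1 - F t) * t * (1 + t) ≤ t := by
    have h4 := mul_le_mul_of_nonneg_right h2 (le_of_lt (pow_pos hpos 2))
    calc (1 - F t) * t * (1 + t) = (1 - F t) * (t / (1 + t)) * (1 + t) ^ 2 := by
          field_simp
    _ ≤ t / (1 + t) ^ 2 * (1 + t) ^ 2 := h4
    _ = t := by field_simp
  nlinarith [h3, htpos]


include hFc hmono hzero hlim hrenewal in
theorem h_lower : ∀ δ : ℝ, 0 < δ → δ < 1 → ∀ t : ℝ, 0 < t →
    δ * (t ^ 2 / (1 + t) ^ 2 - t * Real.log (1 + δ * t) / (1 + (1 - δ) * t) ^ 2)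
      ≤ (δ * t) * (1 - F (δ * t)) := by
  intro δ hδ0 hδ1 t ht0
  have hδt0 : 0 < δ * t := mul_pos hδ0 ht0
  have hδtt : δ * t ≤ t := by nlinarith
  have hIa := intH F hFc (le_rfl) (le_of_lt hδt0) (le_trans hδtt le_rfl)
  have hIb := intH F hFc (le_of_lt hδt0) hδtt le_rfl
  have hsplit : (∫ y in (0:ℝ)..(δ*t), (1 - F y) / (1 + (t - y)) ^ 2)
      + (∫ y in (δ*t)..t, (1 - F y) / (1 + (t - y)) ^ 2) = t / (1 + t) ^ 2 := by
    rw [intervalIntegral.integral_add_adjacent_intervals hIa hIb]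
    exact h_identity F hFc hmono hlim hrenewal t (le_of_lt ht0)
  have hden : (0:ℝ) < 1 + (1 - δ) * t := by nlinarith
  -- bound A
  have hA : (∫ y in (0:ℝ)..(δ*t), (1 - F y) / (1 + (t - y)) ^ 2)
      ≤ Real.log (1 + δ * t) / (1 + (1 - δ) * t) ^ 2 := by
    have step : (∫ y in (0:ℝ)..(δ*t), (1 - F y) / (1 + (t - y)) ^ 2)
        ≤ ∫ y in (0:ℝ)..(δ*t), 1 / (1 + y) * (1 / (1 + (1 - δ) * t) ^ 2) := by
      apply intervalIntegral.integral_mono_on (le_of_lt hδt0) hIa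
      · apply ContinuousOn.intervalIntegrable
        apply ContinuousOn.mul ?_ continuousOn_const
        apply continuousOn_const.div (by fun_prop)
        intro y hy
        rw [Set.uIcc_of_le (le_of_lt hδt0)] at hy
        nlinarith [hy.1]
      · intro y hy
        have hy1 : (0:ℝ) < 1 + y := by linarith [hy.1]
        have hyt : (0:ℝ) < 1 + (t - y) := by nlinarith [hy.2]
        have h1 : (1 - F y) / (1 + (t - y)) ^ 2 ≤ (1 / (1 + y)) / (1 + (t - y)) ^ 2 := by
          apply (div_le_div_iff_of_pos_right (by positivity)).mpr
          exact h_upper F hFc hmono hzero hlim hrenewal y hy.1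
        refine h1.trans ?_
        have hle : 1 + (1 - δ) * t ≤ 1 + (t - y) := by nlinarith [hy.2]
        have h2 : (1 + (1 - δ) * t) ^ 2 ≤ (1 + (t - y)) ^ 2 := by nlinarith
        have h3 : (1:ℝ) / (1 + (t - y)) ^ 2 ≤ 1 / (1 + (1 - δ) * t) ^ 2 :=
          one_div_le_one_div_of_le (by positivity) h2
        calc (1 / (1 + y)) / (1 + (t - y)) ^ 2
            = (1 / (1 + y)) * (1 / (1 + (t - y)) ^ 2) := div_eq_mul_one_div _ _
          _ ≤ (1 / (1 + y)) * (1 / (1 + (1 - δ) * t) ^ 2) :=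
              mul_le_mul_of_nonneg_left h3 (by positivity)
    refine step.trans (le_of_eq ?_)
    rw [intervalIntegral.integral_mul_const, helperLog (by norm_num) (le_of_lt hδt0)]
    norm_num
    ring
  -- bound B
  have hB : (∫ y in (δ*t)..t, (1 - F y) / (1 + (t - y)) ^ 2) ≤ 1 - F (δ * t) := by
    have step : (∫ y in (δ*t)..t, (1 - F y) / (1 + (t - y)) ^ 2)
        ≤ ∫ y in (δ*t)..t, (1 - F (δ*t)) / (1 + (t - y)) ^ 2 := by
      apply intervalIntegral.integral_mono_on hδtt hIb
      · apply ContinuousOn.intervalIntegrable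
        apply continuousOn_const.div (by fun_prop)
        intro y hy
        rw [Set.uIcc_of_le hδtt] at hy
        exact pow_ne_zero _ (by nlinarith [hy.2] : (1:ℝ) + (t - y) ≠ 0)
      · intro y hy
        have hker : (0:ℝ) < (1 + (t - y)) ^ 2 := by nlinarith [hy.2]
        exact (div_le_div_iff_of_pos_right hker).mpr
          (by linarith [hmono (δ*t) y (le_of_lt hδt0) hy.1])
    refine step.trans ?_
    have e : ∀ y : ℝ, (1 - F (δ*t)) / (1 + (t - y)) ^ 2
        = (1 - F (δ*t)) * (1 / (1 + (t - y)) ^ 2) := fun y => div_eq_mul_one_div _ _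
    simp_rw [e]
    rw [intervalIntegral.integral_const_mul, helperK hδtt le_rfl]
    have hF1 : F (δ * t) ≤ 1 := F_le_one F hmono hlim (δ*t) (le_of_lt hδt0)
    have : 1 / (1 + (t - t)) - 1 / (1 + (t - δ * t)) ≤ 1 := by
      have h1 : (0:ℝ) < 1 + (t - δ * t) := by nlinarith
      have h2 : 0 ≤ 1 / (1 + (t - δ * t)) := by positivity
      simp only [sub_self, add_zero]
      norm_num
      linarith
    nlinarith [this, hF1]
  -- combine
  have hcomb : t / (1 + t) ^ 2 - Real.log (1 + δ * t) / (1 + (1 - δ) * t) ^ 2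
      ≤ 1 - F (δ * t) := by linarith
  have := mul_le_mul_of_nonneg_left hcomb (le_of_lt hδt0)
  calc δ * (t ^ 2 / (1 + t) ^ 2 - t * Real.log (1 + δ * t) / (1 + (1 - δ) * t) ^ 2)
      = (δ * t) * (t / (1 + t) ^ 2 - Real.log (1 + δ * t) / (1 + (1 - δ) * t) ^ 2) := by
        ring
    _ ≤ (δ * t) * (1 - F (δ * t)) := this


theorem lim1 : Tendsto (fun t : ℝ => t ^ 2 / (1 + t) ^ 2) atTop (nhds 1) := by
  have h : Tendsto (fun t : ℝ => ((1 + t⁻¹) ^ 2)⁻¹) atTop (nhds 1) := by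
    have := ((tendsto_const_nhds (x := (1:ℝ)).add tendsto_inv_atTop_zero).pow 2).inv₀
      (by norm_num)
    simpa using this
  apply h.congr'
  filter_upwards [eventually_gt_atTop 0] with t ht
  have h1 : (0:ℝ) < 1 + t := by linarith
  field_simp
  ring

theorem lim2 {δ : ℝ} (hδ0 : 0 < δ) (hδ1 : δ < 1) :
    Tendsto (fun t : ℝ => t * Real.log (1 + δ * t) / (1 + (1 - δ) * t) ^ 2)
      atTop (nhds 0) := by
  have hlog : Tendsto (fun t : ℝ => Real.log (1 + δ * t) / (1 + δ * t)) atTop (nhds 0) := by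
    have h1 : Tendsto (fun t : ℝ => 1 + δ * t) atTop atTop :=
      tendsto_atTop_add_const_left _ _ (Tendsto.const_mul_atTop hδ0 tendsto_id)
    have h2 := Real.isLittleO_log_id_atTop.tendsto_div_nhds_zero
    have := h2.comp h1
    simpa [Function.comp_def] using this
  have hrat : Tendsto (fun t : ℝ => (t⁻¹ + δ) / (t⁻¹ + (1 - δ)) ^ 2) atTop
      (nhds (δ / (1 - δ) ^ 2)) := by
    have hnum : Tendsto (fun t : ℝ => t⁻¹ + δ) atTop (nhds δ) := by
      simpa using tendsto_inv_atTop_zero.add (tendsto_const_nhds (x := δ))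
    have hden : Tendsto (fun t : ℝ => (t⁻¹ + (1 - δ)) ^ 2) atTop (nhds ((1 - δ) ^ 2)) := by
      have h3 : Tendsto (fun t : ℝ => t⁻¹ + (1 - δ)) atTop (nhds (1 - δ)) := by
        simpa using tendsto_inv_atTop_zero.add (tendsto_const_nhds (x := 1 - δ))
      simpa using h3.pow 2
    exact hnum.div hden (pow_ne_zero _ (by linarith))
  have hmul := hlog.mul hrat
  rw [zero_mul] at hmul
  apply hmul.congr'
  filter_upwards [eventually_gt_atTop 0] with t ht
  have h1 : (0:ℝ) < 1 + δ * t := by nlinarith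
  have h2 : (0:ℝ) < 1 + (1 - δ) * t := by nlinarith
  field_simp

include hFc hmono hzero hlim hrenewal in
theorem tendsto_t_oneSubF : Tendsto (fun t : ℝ => t * (1 - F t)) atTop (nhds 1) := by
  rw [tendsto_order]
  constructor
  · intro c hc
    set δ : ℝ := (1 + max c 0) / 2 with hδdef
    have hm0 : (0:ℝ) ≤ max c 0 := le_max_right c 0
    have hm1 : max c 0 < 1 := max_lt hc one_pos
    have hδ0 : 0 < δ := by rw [hδdef]; linarith
    have hδ1 : δ < 1 := by rw [hδdef]; linarith
    have hcδ : c < δ := by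
      have := le_max_left c 0
      rw [hδdef]; linarith
    have hcomp : Tendsto (fun s : ℝ => s / δ) atTop atTop :=
      tendsto_id.atTop_div_const hδ0
    have hBlim : Tendsto (fun s : ℝ => δ * ((s/δ) ^ 2 / (1 + s/δ) ^ 2
        - (s/δ) * Real.log (1 + δ * (s/δ)) / (1 + (1 - δ) * (s/δ)) ^ 2)) atTop (nhds δ) := by
      have := ((lim1.sub (lim2 hδ0 hδ1)).comp hcomp).const_mul δ
      simpa [Function.comp, mul_one] using this
    have hev := hBlim.eventually (eventually_gt_nhds hcδ)
    filter_upwards [hev, eventually_gt_atTop 0] with s hs hs0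
    have hts : 0 < s / δ := div_pos hs0 hδ0
    have hmain := h_lower F hFc hmono hzero hlim hrenewal δ hδ0 hδ1 (s/δ) hts
    have hs' : δ * (s / δ) = s := by field_simp
    rw [hs'] at hmain hs
    linarith
  · intro c hc
    filter_upwards [eventually_ge_atTop (0:ℝ)] with t ht
    have hpos : (0:ℝ) < 1 + t := by linarith
    have h1 := h_upper F hFc hmono hzero hlim hrenewal t ht
    have h2 : t * (1 - F t) ≤ t * (1 / (1 + t)) :=
      mul_le_mul_of_nonneg_left h1 ht
    have h3 : t * (1 / (1 + t)) < 1 := by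
      rw [mul_one_div, div_lt_one hpos]; linarith
    linarith


theorem limLogRatio : Tendsto (fun x : ℝ => Real.log (1 + x) / Real.log x) atTop (nhds 1) := by
  have hlog0 : Tendsto (fun x : ℝ => (Real.log x)⁻¹) atTop (nhds 0) :=
    Real.tendsto_log_atTop.inv_tendsto_atTop
  have hsmall : Tendsto (fun x : ℝ => Real.log (1 + x⁻¹)) atTop (nhds 0) := by
    have h1 : Tendsto (fun x : ℝ => 1 + x⁻¹) atTop (nhds 1) := by
      simpa using (tendsto_const_nhds (x := (1:ℝ))).add tendsto_inv_atTop_zero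
    have := (Real.continuousAt_log (by norm_num : (1:ℝ) ≠ 0)).tendsto.comp h1
    simpa [Function.comp_def] using this
  have base : Tendsto (fun x : ℝ => 1 + Real.log (1 + x⁻¹) * (Real.log x)⁻¹)
      atTop (nhds 1) := by
    simpa using (tendsto_const_nhds (x := (1:ℝ))).add (hsmall.mul hlog0)
  apply base.congr'
  filter_upwards [eventually_gt_atTop 1] with x hx
  have hx0 : (0:ℝ) < x := by linarith
  have hlogx : 0 < Real.log x := Real.log_pos hx
  have hsplit : Real.log (1 + x) = Real.log x + Real.log (1 + x⁻¹) := by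
    rw [← Real.log_mul (ne_of_gt hx0) (by positivity)]
    congr 1
    field_simp
    ring
  rw [hsplit]
  field_simp

include hFc hmono hzero hlim hrenewal in
theorem avg_one : Tendsto (fun x : ℝ => (∫ y in (0:ℝ)..x, (1 - F y)) / Real.log x)
    atTop (nhds 1) := by
  have hint1 : ∀ {a b : ℝ}, 0 ≤ a → a ≤ b →
      IntervalIntegrable (fun y => 1 - F y) volume a b := by
    intro a b ha hab
    apply ContinuousOn.intervalIntegrable
    rw [Set.uIcc_of_le hab]
    exact continuousOn_const.sub (hFc.mono fun u hu => le_trans ha hu.1)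
  rw [tendsto_order]
  constructor
  · intro c hc
    set ε : ℝ := (1 - c) / 2 with hεdef
    have hε : 0 < ε := by rw [hεdef]; linarith
    have h1e : c < 1 - ε := by rw [hεdef]; linarith
    have hε1 : 1 - ε < 1 := by linarith
    obtain ⟨T, hT⟩ := eventually_atTop.1
      ((tendsto_t_oneSubF F hFc hmono hzero hlim hrenewal).eventually
        (eventually_gt_nhds hε1))
    set T' : ℝ := max T 1 with hT'def
    have hT'1 : (1:ℝ) ≤ T' := le_max_right T 1
    have hT'0 : (0:ℝ) ≤ T' := by linarith
    have hTbd : ∀ t, T' ≤ t → (1 - ε) / t ≤ 1 - F t := by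
      intro t htT
      have h2 := hT t (le_trans (le_max_left T 1) htT)
      have ht1 : (1:ℝ) ≤ t := le_trans hT'1 htT
      rw [div_le_iff₀ (by linarith)]
      nlinarith
    have hlog0 : Tendsto (fun x : ℝ => (Real.log x)⁻¹) atTop (nhds 0) :=
      Real.tendsto_log_atTop.inv_tendsto_atTop
    have hlb : Tendsto (fun x : ℝ => (1 - ε) * (1 - Real.log T' * (Real.log x)⁻¹))
        atTop (nhds (1 - ε)) := by
      have h3 := (tendsto_const_nhds (x := (1:ℝ))).sub (hlog0.const_mul (Real.log T'))
      simpa using h3.const_mul (1 - ε)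
    filter_upwards [hlb.eventually (eventually_gt_nhds h1e),
      eventually_ge_atTop (max T' 2)] with x hx1 hx2
    have hxT : T' ≤ x := le_trans (le_max_left _ _) hx2
    have hx2' : (2:ℝ) ≤ x := le_trans (le_max_right _ _) hx2
    have hlogx : 0 < Real.log x := Real.log_pos (by linarith)
    have hsplit : (∫ y in (0:ℝ)..x, (1 - F y))
        = (∫ y in (0:ℝ)..T', (1 - F y)) + ∫ y in T'..x, (1 - F y) :=
      (intervalIntegral.integral_add_adjacent_intervals (hint1 le_rfl hT'0)
        (hint1 hT'0 hxT)).symm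
    have hpos1 : 0 ≤ ∫ y in (0:ℝ)..T', (1 - F y) :=
      intervalIntegral.integral_nonneg hT'0
        (fun u hu => by linarith [F_le_one F hmono hlim u hu.1])
    have hcomp : (∫ y in T'..x, (1 - ε) / y) ≤ ∫ y in T'..x, (1 - F y) := by
      apply intervalIntegral.integral_mono_on hxT ?_ (hint1 hT'0 hxT)
        (fun y hy => hTbd y hy.1)
      apply ContinuousOn.intervalIntegrable
      apply continuousOn_const.div continuousOn_id
      intro y hy
      rw [Set.uIcc_of_le hxT] at hy
      have hy1 : (0:ℝ) < y := by linarith [le_trans hT'1 hy.1]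
      exact ne_of_gt hy1
    have hval : (∫ y in T'..x, (1 - ε) / y) = (1 - ε) * (Real.log x - Real.log T') := by
      have e : ∀ y : ℝ, (1 - ε) / y = (1 - ε) * (1 / y) := fun y => div_eq_mul_one_div _ _
      simp_rw [e]
      rw [intervalIntegral.integral_const_mul, integral_one_div]
      · rw [Real.log_div (by linarith) (by linarith)]
      · intro h0
        rw [Set.uIcc_of_le hxT] at h0
        have : (1:ℝ) ≤ (0:ℝ) := le_trans hT'1 h0.1
        linarith
    have hge : (1 - ε) * (Real.log x - Real.log T') ≤ ∫ y in (0:ℝ)..x, (1 - F y) := by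
      rw [hsplit, ← hval]
      linarith
    have heq : (1 - ε) * (Real.log x - Real.log T') / Real.log x
        = (1 - ε) * (1 - Real.log T' * (Real.log x)⁻¹) := by
      field_simp
    calc c < (1 - ε) * (1 - Real.log T' * (Real.log x)⁻¹) := hx1
      _ = (1 - ε) * (Real.log x - Real.log T') / Real.log x := heq.symm
      _ ≤ (∫ y in (0:ℝ)..x, (1 - F y)) / Real.log x :=
          (div_le_div_iff_of_pos_right hlogx).mpr hge
  · intro c hc
    filter_upwards [limLogRatio.eventually (eventually_lt_nhds hc),
      eventually_ge_atTop (2:ℝ)] with x hx1 hx2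
    have hx0 : (0:ℝ) ≤ x := by linarith
    have hlogx : 0 < Real.log x := Real.log_pos (by linarith)
    have hub : (∫ y in (0:ℝ)..x, (1 - F y)) ≤ Real.log (1 + x) := by
      have hcomp : (∫ y in (0:ℝ)..x, (1 - F y)) ≤ ∫ y in (0:ℝ)..x, 1 / (1 + y) := by
        apply intervalIntegral.integral_mono_on hx0 (hint1 le_rfl hx0) ?_
          (fun y hy => h_upper F hFc hmono hzero hlim hrenewal y hy.1)
        apply ContinuousOn.intervalIntegrable
        apply continuousOn_const.div (by fun_prop)
        intro y hy
        rw [Set.uIcc_of_le hx0] at hy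
        nlinarith [hy.1]
      rw [helperLog (by norm_num) hx0] at hcomp
      simpa using hcomp
    calc (∫ y in (0:ℝ)..x, (1 - F y)) / Real.log x
        ≤ Real.log (1 + x) / Real.log x := (div_le_div_iff_of_pos_right hlogx).mpr hub
      _ < c := hx1

include hFc hmono hzero hlim hrenewal in
theorem avg_t : Tendsto (fun x : ℝ => (∫ y in (0:ℝ)..x, y * (1 - F y)) / x)
    atTop (nhds 1) := by
  have hint1 : ∀ {a b : ℝ}, 0 ≤ a → a ≤ b →
      IntervalIntegrable (fun y => y * (1 - F y)) volume a b := by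
    intro a b ha hab
    apply ContinuousOn.intervalIntegrable
    rw [Set.uIcc_of_le hab]
    exact continuousOn_id.mul
      (continuousOn_const.sub (hFc.mono fun u hu => le_trans ha hu.1))
  rw [tendsto_order]
  constructor
  · intro c hc
    set ε : ℝ := (1 - c) / 2 with hεdef
    have hε : 0 < ε := by rw [hεdef]; linarith
    have h1e : c < 1 - ε := by rw [hεdef]; linarith
    have hε1 : 1 - ε < 1 := by linarith
    obtain ⟨T, hT⟩ := eventually_atTop.1
      ((tendsto_t_oneSubF F hFc hmono hzero hlim hrenewal).eventually
        (eventually_gt_nhds hε1))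
    set T' : ℝ := max T 1 with hT'def
    have hT'1 : (1:ℝ) ≤ T' := le_max_right T 1
    have hT'0 : (0:ℝ) ≤ T' := by linarith
    have hTbd : ∀ t, T' ≤ t → 1 - ε ≤ t * (1 - F t) := fun t htT =>
      le_of_lt (hT t (le_trans (le_max_left T 1) htT))
    have hlb : Tendsto (fun x : ℝ => (1 - ε) * (1 - T' * x⁻¹)) atTop (nhds (1 - ε)) := by
      have h3 := (tendsto_const_nhds (x := (1:ℝ))).sub (tendsto_inv_atTop_zero.const_mul T')
      simpa using h3.const_mul (1 - ε)
    filter_upwards [hlb.eventually (eventually_gt_nhds h1e),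
      eventually_ge_atTop (max T' 1)] with x hx1 hx2
    have hxT : T' ≤ x := le_trans (le_max_left _ _) hx2
    have hx1' : (1:ℝ) ≤ x := le_trans (le_max_right _ _) hx2
    have hx0 : (0:ℝ) < x := by linarith
    have hsplit : (∫ y in (0:ℝ)..x, y * (1 - F y))
        = (∫ y in (0:ℝ)..T', y * (1 - F y)) + ∫ y in T'..x, y * (1 - F y) :=
      (intervalIntegral.integral_add_adjacent_intervals (hint1 le_rfl hT'0)
        (hint1 hT'0 hxT)).symm
    have hpos1 : 0 ≤ ∫ y in (0:ℝ)..T', y * (1 - F y) :=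
      intervalIntegral.integral_nonneg hT'0 (fun u hu =>
        mul_nonneg hu.1 (by linarith [F_le_one F hmono hlim u hu.1]))
    have hcomp : (∫ y in T'..x, (1 - ε)) ≤ ∫ y in T'..x, y * (1 - F y) := by
      apply intervalIntegral.integral_mono_on hxT intervalIntegrable_const
        (hint1 hT'0 hxT) (fun y hy => hTbd y hy.1)
    have hval : (∫ y in T'..x, (1 - ε)) = (1 - ε) * (x - T') := by
      rw [intervalIntegral.integral_const, smul_eq_mul]
      ring
    have hge : (1 - ε) * (x - T') ≤ ∫ y in (0:ℝ)..x, y * (1 - F y) := by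
      rw [hsplit, ← hval]
      linarith
    have heq : (1 - ε) * (x - T') / x = (1 - ε) * (1 - T' * x⁻¹) := by
      field_simp
    calc c < (1 - ε) * (1 - T' * x⁻¹) := hx1
      _ = (1 - ε) * (x - T') / x := heq.symm
      _ ≤ (∫ y in (0:ℝ)..x, y * (1 - F y)) / x :=
          (div_le_div_iff_of_pos_right hx0).mpr hge
  · intro c hc
    filter_upwards [eventually_gt_atTop (0:ℝ)] with x hx0
    have hub : (∫ y in (0:ℝ)..x, y * (1 - F y)) ≤ x := by
      have hcomp : (∫ y in (0:ℝ)..x, y * (1 - F y)) ≤ ∫ y in (0:ℝ)..x, (1:ℝ) := by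
        apply intervalIntegral.integral_mono_on (le_of_lt hx0) (hint1 le_rfl (le_of_lt hx0))
          intervalIntegrable_const
        intro y hy
        have h1 := h_upper F hFc hmono hzero hlim hrenewal y hy.1
        have h2 : y * (1 - F y) ≤ y * (1 / (1 + y)) := mul_le_mul_of_nonneg_left h1 hy.1
        have h3 : y * (1 / (1 + y)) ≤ 1 := by
          rw [mul_one_div, div_le_one (by linarith [hy.1])]
          linarith
        linarith
      simpa using hcomp
    have : (∫ y in (0:ℝ)..x, y * (1 - F y)) / x ≤ 1 := by
      rw [div_le_one hx0]
      simpa using hub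
    linarith

end Tail

theorem parts1 (F F' : ℝ → ℝ)
    (hFc : ContinuousOn F (Ici 0))
    (hderiv : ∀ t, 0 ≤ t → HasDerivWithinAt F (F' t) (Ici 0) t)
    (hcont : ContinuousOn F' (Ici 0)) {x : ℝ} (hx : 0 ≤ x) :
    (∫ t in (0:ℝ)..x, t * F' t) = x * F x - ∫ t in (0:ℝ)..x, F t := by
  have hIccIci : Icc (0:ℝ) x ⊆ Ici 0 := fun u hu => hu.1
  have hd : ∀ t ∈ Ioo (0:ℝ) x, HasDerivWithinAt (fun u => u * F u)
      (F t + t * F' t) (Ioi t) t := by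
    intro t ht
    have hFt : HasDerivAt F (F' t) t :=
      (hderiv t (le_of_lt ht.1)).hasDerivAt (Ici_mem_nhds ht.1)
    have h2 := (hasDerivAt_id t).mul hFt
    have h3 : HasDerivAt (fun u => u * F u) (F t + t * F' t) t := by
      refine h2.congr_deriv ?_
      simp [mul_comm]
    exact h3.hasDerivWithinAt
  have hcu : ContinuousOn (fun u => u * F u) (Icc 0 x) :=
    continuousOn_id.mul (hFc.mono hIccIci)
  have hI1 : IntervalIntegrable F volume 0 x := by
    apply ContinuousOn.intervalIntegrable
    rw [Set.uIcc_of_le hx]; exact hFc.mono hIccIci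
  have hI2 : IntervalIntegrable (fun t => t * F' t) volume 0 x := by
    apply ContinuousOn.intervalIntegrable
    rw [Set.uIcc_of_le hx]; exact continuousOn_id.mul (hcont.mono hIccIci)
  have hftc := intervalIntegral.integral_eq_sub_of_hasDeriv_right_of_le hx hcu hd
    (hI1.add hI2)
  rw [intervalIntegral.integral_add hI1 hI2] at hftc
  simp at hftc
  linarith

theorem parts2 (F F' : ℝ → ℝ)
    (hFc : ContinuousOn F (Ici 0))
    (hderiv : ∀ t, 0 ≤ t → HasDerivWithinAt F (F' t) (Ici 0) t)
    (hcont : ContinuousOn F' (Ici 0)) {x : ℝ} (hx : 0 ≤ x) :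
    (∫ t in (0:ℝ)..x, t ^ 2 * F' t) = x ^ 2 * F x - 2 * ∫ t in (0:ℝ)..x, t * F t := by
  have hIccIci : Icc (0:ℝ) x ⊆ Ici 0 := fun u hu => hu.1
  have hd : ∀ t ∈ Ioo (0:ℝ) x, HasDerivWithinAt (fun u => u ^ 2 * F u)
      (2 * t * F t + t ^ 2 * F' t) (Ioi t) t := by
    intro t ht
    have hFt : HasDerivAt F (F' t) t :=
      (hderiv t (le_of_lt ht.1)).hasDerivAt (Ici_mem_nhds ht.1)
    have hsq : HasDerivAt (fun u : ℝ => u ^ 2) (2 * t) t := by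
      simpa using hasDerivAt_pow 2 t
    have h2 := hsq.mul hFt
    have h3 : HasDerivAt (fun u => u ^ 2 * F u) (2 * t * F t + t ^ 2 * F' t) t := by
      exact h2
    exact h3.hasDerivWithinAt
  have hcu : ContinuousOn (fun u => u ^ 2 * F u) (Icc 0 x) :=
    (continuousOn_id.pow 2).mul (hFc.mono hIccIci)
  have hI1 : IntervalIntegrable (fun t => 2 * t * F t) volume 0 x := by
    apply ContinuousOn.intervalIntegrable
    rw [Set.uIcc_of_le hx]
    exact (continuousOn_const.mul continuousOn_id).mul (hFc.mono hIccIci)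
  have hI2 : IntervalIntegrable (fun t => t ^ 2 * F' t) volume 0 x := by
    apply ContinuousOn.intervalIntegrable
    rw [Set.uIcc_of_le hx]; exact (continuousOn_id.pow 2).mul (hcont.mono hIccIci)
  have hftc := intervalIntegral.integral_eq_sub_of_hasDeriv_right_of_le hx hcu hd
    (hI1.add hI2)
  rw [intervalIntegral.integral_add hI1 hI2] at hftc
  have he : (∫ t in (0:ℝ)..x, 2 * t * F t) = 2 * ∫ t in (0:ℝ)..x, t * F t := by
    rw [← intervalIntegral.integral_const_mul]
    apply intervalIntegral.integral_congr
    intro t _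
    ring
  rw [he] at hftc
  simp at hftc
  linarith

/-- For the CDF `F` solving the renewal equation, with `ρₙ = n√(log n)`,
`mₙ = ∫₀^{ρₙ} t F'(t) dt` and `sₙ = ∫₀^{ρₙ} t² F'(t) dt`, one has
`mₙ / log n → 1` and `sₙ / (n√(log n)) → 1` as `n → ∞`. -/
theorem truncated_moments_at_rho_n
    (F F' : ℝ → ℝ)
    (hmono : ∀ a b : ℝ, 0 ≤ a → a ≤ b → F a ≤ F b)
    (hzero : F 0 = 0)
    (hlim : Filter.Tendsto F atTop (nhds 1))
    (hderiv : ∀ t, 0 ≤ t → HasDerivWithinAt F (F' t) (Ici 0) t)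
    (hcont : ContinuousOn F' (Ici 0))
    (hrenewal : ∀ t, 0 ≤ t →
      F t = 2 * t / (1 + t) ^ 3 + ∫ y in (0:ℝ)..t, 2 / (1 + (t - y)) ^ 3 * F y) :
    Filter.Tendsto
      (fun n : ℕ =>
        (∫ t in (0:ℝ)..((n : ℝ) * Real.sqrt (Real.log n)), t * F' t) / Real.log n)
      atTop (nhds 1)
    ∧ Filter.Tendsto
      (fun n : ℕ =>
        (∫ t in (0:ℝ)..((n : ℝ) * Real.sqrt (Real.log n)), t ^ 2 * F' t)
          / ((n : ℝ) * Real.sqrt (Real.log n)))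
      atTop (nhds 1) := by
  have hFc : ContinuousOn F (Ici 0) := fun t ht => (hderiv t ht).continuousWithinAt
  set ρ : ℕ → ℝ := fun n => (n:ℝ) * Real.sqrt (Real.log n) with hρdef
  have hρ0 : ∀ n : ℕ, 0 ≤ ρ n := fun n =>
    mul_nonneg (Nat.cast_nonneg n) (Real.sqrt_nonneg _)
  have hlogbig : ∀ n : ℕ, 3 ≤ n → 1 ≤ Real.log n := by
    intro n hn
    have hn3 : (3:ℝ) ≤ (n:ℝ) := by exact_mod_cast hn
    rw [Real.le_log_iff_exp_le (by linarith)]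
    have := Real.exp_one_lt_d9
    linarith
  have hρge : ∀ᶠ n : ℕ in atTop, (n:ℝ) ≤ ρ n := by
    filter_upwards [eventually_ge_atTop 3] with n hn
    have h1 := hlogbig n hn
    have hsq1 : 1 ≤ Real.sqrt (Real.log n) := by
      rw [show (1:ℝ) = Real.sqrt 1 by simp]
      exact Real.sqrt_le_sqrt h1
    calc (n:ℝ) = (n:ℝ) * 1 := by ring
      _ ≤ (n:ℝ) * Real.sqrt (Real.log n) :=
          mul_le_mul_of_nonneg_left hsq1 (Nat.cast_nonneg n)
  have hρtop : Tendsto ρ atTop atTop :=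
    tendsto_atTop_mono' atTop hρge tendsto_natCast_atTop_atTop
  have tendA : Tendsto (fun n : ℕ => ρ n * (1 - F (ρ n))) atTop (nhds 1) :=
    (tendsto_t_oneSubF F hFc hmono hzero hlim hrenewal).comp hρtop
  have hlogn : Tendsto (fun n : ℕ => Real.log n) atTop atTop :=
    Real.tendsto_log_atTop.comp tendsto_natCast_atTop_atTop
  have tendB : Tendsto (fun n : ℕ => (Real.log (n:ℝ))⁻¹) atTop (nhds 0) :=
    hlogn.inv_tendsto_atTop
  have tendC : Tendsto (fun n : ℕ =>
      (∫ y in (0:ℝ)..(ρ n), (1 - F y)) / Real.log (ρ n)) atTop (nhds 1) :=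
    (avg_one F hFc hmono hzero hlim hrenewal).comp hρtop
  have tendE : Tendsto (fun n : ℕ =>
      (∫ y in (0:ℝ)..(ρ n), y * (1 - F y)) / ρ n) atTop (nhds 1) :=
    (avg_t F hFc hmono hzero hlim hrenewal).comp hρtop
  have tendLL : Tendsto (fun n : ℕ => Real.log (Real.log n) / Real.log n)
      atTop (nhds 0) := by
    have := Real.isLittleO_log_id_atTop.tendsto_div_nhds_zero.comp hlogn
    simpa [Function.comp_def] using this
  have tendD : Tendsto (fun n : ℕ => Real.log (ρ n) / Real.log n) atTop (nhds 1) := by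
    have base : Tendsto (fun n : ℕ =>
        1 + (1/2 : ℝ) * (Real.log (Real.log n) / Real.log n)) atTop (nhds 1) := by
      simpa using (tendsto_const_nhds (x := (1:ℝ))).add (tendLL.const_mul (1/2 : ℝ))
    apply base.congr'
    filter_upwards [eventually_ge_atTop 3] with n hn
    have hn3 : (3:ℝ) ≤ (n:ℝ) := by exact_mod_cast hn
    have hlog1 := hlogbig n hn
    have hlogpos : 0 < Real.log n := by linarith
    have hsqpos : 0 < Real.sqrt (Real.log n) := Real.sqrt_pos.mpr hlogpos
    have hlogρ : Real.log (ρ n) = Real.log n + (1/2 : ℝ) * Real.log (Real.log n) := by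
      show Real.log ((n:ℝ) * Real.sqrt (Real.log n)) = _
      rw [Real.log_mul (by linarith) (ne_of_gt hsqpos), Real.log_sqrt (le_of_lt hlogpos)]
      ring
    rw [hlogρ]
    field_simp
  have hIF : ∀ n : ℕ, IntervalIntegrable F volume 0 (ρ n) := by
    intro n
    apply ContinuousOn.intervalIntegrable
    rw [Set.uIcc_of_le (hρ0 n)]
    exact hFc.mono fun u hu => hu.1
  have hItF : ∀ n : ℕ, IntervalIntegrable (fun y => y * F y) volume 0 (ρ n) := by
    intro n
    apply ContinuousOn.intervalIntegrable
    rw [Set.uIcc_of_le (hρ0 n)]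
    exact continuousOn_id.mul (hFc.mono fun u hu => hu.1)
  have hevρ : ∀ᶠ n : ℕ in atTop, (3:ℝ) ≤ ρ n := by
    filter_upwards [hρge, eventually_ge_atTop 3] with n h1 h2
    have : (3:ℝ) ≤ (n:ℝ) := by exact_mod_cast h2
    linarith
  constructor
  · -- first moment
    have key : ∀ᶠ n : ℕ in atTop,
        (∫ t in (0:ℝ)..(ρ n), t * F' t) / Real.log n
        = -(ρ n * (1 - F (ρ n))) * (Real.log (n:ℝ))⁻¹
          + ((∫ y in (0:ℝ)..(ρ n), (1 - F y)) / Real.log (ρ n))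
            * (Real.log (ρ n) / Real.log n) := by
      filter_upwards [eventually_ge_atTop 3, hevρ] with n hn hρn
      have hn3 : (3:ℝ) ≤ (n:ℝ) := by exact_mod_cast hn
      have hlogpos : 0 < Real.log n := by linarith [hlogbig n hn]
      have hlogρpos : 0 < Real.log (ρ n) := Real.log_pos (by linarith)
      have h1 := parts1 F F' hFc hderiv hcont (hρ0 n)
      have h2 : (∫ y in (0:ℝ)..(ρ n), (1 - F y)) = ρ n - ∫ y in (0:ℝ)..(ρ n), F y := by
        rw [intervalIntegral.integral_sub intervalIntegrable_const (hIF n)]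
        simp
      rw [h1, h2]
      field_simp
      ring
    have lim := (tendA.neg.mul tendB).add (tendC.mul tendD)
    have : (-(1:ℝ)) * 0 + 1 * 1 = 1 := by norm_num
    rw [this] at lim
    refine lim.congr' ?_
    filter_upwards [key] with n h
    exact h.symm
  · -- second moment
    have key : ∀ᶠ n : ℕ in atTop,
        (∫ t in (0:ℝ)..(ρ n), t ^ 2 * F' t) / ρ n
        = -(ρ n * (1 - F (ρ n)))
          + 2 * ((∫ y in (0:ℝ)..(ρ n), y * (1 - F y)) / ρ n) := by
      filter_upwards [hevρ] with n hρn
      have hρpos : 0 < ρ n := by linarith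
      have h1 := parts2 F F' hFc hderiv hcont (hρ0 n)
      have h2 : (∫ y in (0:ℝ)..(ρ n), y * (1 - F y))
          = (ρ n) ^ 2 / 2 - ∫ y in (0:ℝ)..(ρ n), y * F y := by
        have e : (∫ y in (0:ℝ)..(ρ n), y * (1 - F y))
            = (∫ y in (0:ℝ)..(ρ n), (y : ℝ)) - ∫ y in (0:ℝ)..(ρ n), y * F y := by
          rw [← intervalIntegral.integral_sub intervalIntegral.intervalIntegrable_id (hItF n)]
          apply intervalIntegral.integral_congr
          intro y _
          ring
        rw [e, integral_id]
        ring_nf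
      rw [h1, h2]
      field_simp
      ring
    have lim := tendA.neg.add (tendE.const_mul 2)
    have : (-(1:ℝ)) + 2 * 1 = 1 := by norm_num
    rw [this] at lim
    refine lim.congr' ?_
    filter_upwards [key] with n h
    exact h.symm
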